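/- Let m ≥ 2 and let x₁,…,x_{m−1} be real numbers. Define the m×m matrices A and B by: A(1,2) = 1; A(k,k−1) = 1 − x_{k−1} for 2 ≤ k ≤ m; A(k,k+1) = x_{k−1} for 2 ≤ k ≤ m−1; all other entries of A are 0; and B(1,2) = 1, B(k,k−1) = 1 − x_{m+1−k} for 2 ≤ k ≤ m, B(k,k+1) = x_{m+1−k} for 2 ≤ k ≤ m−1, all other entries 0. Then A and B have the same characteristic polynomial: det(λI_m − A) = det(λI_m − B) as polynomials in λ. -/

import Mathlib

open Polynomial Matrix

namespace Stmt19Aux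

noncomputable section

/-- The 2×2 transfer matrix. -/
def Nm (t : ℝ) : Matrix (Fin 2) (Fin 2) ℝ[X] :=
  !![C (1-t) * X, C (1-t) * (X^2-1); C t, C t * X]

/-- The symmetrizing matrix. -/
def Qm : Matrix (Fin 2) (Fin 2) ℝ[X] :=
  !![X, X^2-1; X^2-1, X*(X^2-1)]

lemma NtQ (t : ℝ) : (Nm t)ᵀ * Qm = Qm * Nm t := by
  have h : (Nm t)ᵀ = !![C (1-t) * X, C t; C (1-t) * (X^2-1), C t * X] := by
    rw [Nm, Matrix.eta_fin_two ((!![C (1-t) * X, C (1-t) * (X^2-1); C t, C t * X])ᵀ)]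
    simp
  rw [h, Nm, Qm, Matrix.mul_fin_two, Matrix.mul_fin_two]
  apply Matrix.ext
  intro i j
  fin_cases i <;> fin_cases j <;>
    simp only [Matrix.cons_val', Matrix.cons_val_zero, Matrix.cons_val_one, Matrix.head_cons,
      Matrix.head_fin_const, Matrix.empty_val', Matrix.cons_val_fin_one, Matrix.of_apply] <;>
    ring

def Pl (l : List ℝ) : Matrix (Fin 2) (Fin 2) ℝ[X] := (l.map Nm).prod

lemma Pl_nil : Pl [] = 1 := rfl

lemma Pl_cons (t : ℝ) (l : List ℝ) : Pl (t :: l) = Nm t * Pl l := by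
  simp [Pl]

lemma Pl_append (a b : List ℝ) : Pl (a ++ b) = Pl a * Pl b := by
  simp [Pl]

lemma Pl_reverse (l : List ℝ) : (Pl l)ᵀ * Qm = Qm * Pl l.reverse := by
  induction l with
  | nil => simp [Pl_nil]
  | cons t l ih =>
      rw [Pl_cons, Matrix.transpose_mul, Matrix.mul_assoc, NtQ, ← Matrix.mul_assoc, ih,
        Matrix.mul_assoc, List.reverse_cons, Pl_append, Pl_cons, Pl_nil, mul_one]

/-- The descending list `[z n, …, z 1]`. -/
def dl (z : ℕ → ℝ) (n : ℕ) : List ℝ := List.ofFn (fun i : Fin n => z (n - (i : ℕ)))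

lemma dl_succ (z : ℕ → ℝ) (n : ℕ) : dl z (n+1) = z (n+1) :: dl z n := by
  rw [dl, List.ofFn_succ]
  congr 1
  rw [dl]
  congr 1
  funext i
  congr 1
  simp only [Fin.val_succ]
  omega

lemma ofFn_reverse {α : Type*} : ∀ (n : ℕ) (f : Fin n → α),
    (List.ofFn f).reverse = List.ofFn (fun i => f i.rev) := by
  intro n
  induction n with
  | zero => intro f; simp
  | succ n ih =>
      intro f
      rw [List.ofFn_succ' f, List.concat_eq_append, List.reverse_append, List.reverse_cons,
        List.reverse_nil, List.nil_append, ih, List.ofFn_succ, List.singleton_append]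
      congr 1
      refine congrArg List.ofFn (funext fun i => ?_)
      congr 1
      apply Fin.ext
      simp only [Fin.val_rev, Fin.coe_castSucc, Fin.val_succ]
      omega

def G (z : ℕ → ℝ) (n : ℕ) : Matrix (Fin 2) (Fin 2) ℝ[X] := Pl (dl z n)

lemma G_zero (z : ℕ → ℝ) : G z 0 = 1 := rfl

lemma G_succ (z : ℕ → ℝ) (n : ℕ) : G z (n+1) = Nm (z (n+1)) * G z n := by
  rw [G, dl_succ, Pl_cons, G]

/-- Edge weight of the path. -/
def e (z : ℕ → ℝ) (n : ℕ) : ℝ := (if n = 0 then (1:ℝ) else z n) * (1 - z (n+1))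

/-- The tridiagonal characteristic matrix family. -/
def T (z : ℕ → ℝ) (n : ℕ) : Matrix (Fin n) (Fin n) ℝ[X] :=
  Matrix.of fun i j =>
    if (i:ℕ) = j then X
    else if (j:ℕ)+1 = i then -C (1 - z ((j:ℕ)+1))
    else if (i:ℕ)+1 = j then -C (if (i:ℕ) = 0 then 1 else z i)
    else 0

def g (z : ℕ → ℝ) (n : ℕ) : ℝ[X] := (T z n).det

lemma g_zero (z : ℕ → ℝ) : g z 0 = 1 := Matrix.det_fin_zero

lemma g_one (z : ℕ → ℝ) : g z 1 = X := by
  rw [g, Matrix.det_fin_one]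
  simp [T]

lemma T_submatrix (z : ℕ → ℝ) (n : ℕ) :
    (T z (n+1)).submatrix Fin.castSucc Fin.castSucc = T z n := by
  ext i j
  simp [T, -Fin.val_eq_zero_iff]

lemma g_rec (z : ℕ → ℝ) (n : ℕ) :
    g z (n+2) = X * g z (n+1) - C (e z n) * g z n := by
  have hcol : ((Fin.last n).castSucc).succAbove (Fin.last n) = Fin.last (n+1) := by
    rw [Fin.succAbove_of_le_castSucc _ _ (le_refl _), Fin.succ_last]
  have hvlast2 : ((Fin.last (n+1) : Fin (n+2)) : ℕ) = n+1 := rfl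
  have hvcast : (((Fin.last n).castSucc : Fin (n+2)) : ℕ) = n := rfl
  set M1 : Matrix (Fin (n+1)) (Fin (n+1)) ℝ[X] :=
    (T z (n+2)).submatrix (Fin.last (n+1)).succAbove ((Fin.last n).castSucc).succAbove with hM1def
  have hM1 : M1.det = -C (if n = 0 then (1:ℝ) else z n) * g z n := by
    rw [Matrix.det_succ_column M1 (Fin.last n), Fin.sum_univ_castSucc]
    have hz : ∀ i : Fin n,
        (-1 : ℝ[X]) ^ (((i.castSucc : Fin (n+1)) : ℕ) + ((Fin.last n : Fin (n+1)) : ℕ)) *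
          M1 i.castSucc (Fin.last n) *
          (M1.submatrix (i.castSucc).succAbove (Fin.last n).succAbove).det = 0 := by
      intro i
      have h0 : M1 i.castSucc (Fin.last n) = 0 := by
        rw [hM1def, Matrix.submatrix_apply, Fin.succAbove_last, hcol]
        have hi : (i : ℕ) < n := i.isLt
        have hv1 : ((Fin.castSucc i.castSucc : Fin (n+2)) : ℕ) = (i : ℕ) := rfl
        simp only [T, Matrix.of_apply, hv1, hvlast2]
        split_ifs <;> first | omega | rfl
      rw [h0]
      ring
    rw [Finset.sum_eq_zero (fun i _ => hz i), zero_add]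
    have hentry : M1 (Fin.last n) (Fin.last n) = -C (if n = 0 then (1:ℝ) else z n) := by
      rw [hM1def, Matrix.submatrix_apply, Fin.succAbove_last, hcol]
      have hv1 : ((Fin.castSucc (Fin.last n) : Fin (n+2)) : ℕ) = n := rfl
      simp only [T, Matrix.of_apply, hv1, hvlast2]
      split_ifs <;> first | rfl | omega
    have hminor : M1.submatrix (Fin.last n).succAbove (Fin.last n).succAbove = T z n := by
      rw [Fin.succAbove_last]
      ext i j
      rw [Matrix.submatrix_apply, hM1def, Matrix.submatrix_apply, Fin.succAbove_last]
      have hj : (j : ℕ) < n := j.isLt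
      have hcol2 : ((Fin.last n).castSucc).succAbove j.castSucc = j.castSucc.castSucc := by
        refine Fin.succAbove_of_castSucc_lt _ _ ?_
        rw [Fin.castSucc_lt_castSucc_iff]
        exact Fin.castSucc_lt_last j
      rw [hcol2]
      simp [T, -Fin.val_eq_zero_iff]
    rw [hentry, hminor, Fin.val_last, ← two_mul, Even.neg_one_pow ⟨n, by ring⟩, one_mul]
    rfl
  have hdet := Matrix.det_succ_row (T z (n+2)) (Fin.last (n+1))
  rw [Fin.sum_univ_castSucc, Fin.sum_univ_castSucc] at hdet
  have hzero : ∀ j : Fin n,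
      (-1 : ℝ[X]) ^ (((Fin.last (n+1) : Fin (n+2)) : ℕ) + ((j.castSucc.castSucc : Fin (n+2)) : ℕ)) *
        T z (n+2) (Fin.last (n+1)) j.castSucc.castSucc *
        ((T z (n+2)).submatrix (Fin.last (n+1)).succAbove
          (j.castSucc.castSucc).succAbove).det = 0 := by
    intro j
    have h1 : T z (n+2) (Fin.last (n+1)) j.castSucc.castSucc = 0 := by
      have hj : (j : ℕ) < n := j.isLt
      have hv1 : ((j.castSucc.castSucc : Fin (n+2)) : ℕ) = (j : ℕ) := rfl
      simp only [T, Matrix.of_apply, hv1, hvlast2]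
      split_ifs <;> first | omega | rfl
    rw [h1]
    ring
  rw [Finset.sum_eq_zero (fun j _ => hzero j), zero_add] at hdet
  have hTll : T z (n+2) (Fin.last (n+1)) (Fin.last (n+1)) = X := by
    simp only [T, Matrix.of_apply, hvlast2]
    split_ifs <;> first | rfl | omega
  have hTlc : T z (n+2) (Fin.last (n+1)) ((Fin.last n).castSucc) = -C (1 - z (n+1)) := by
    simp only [T, Matrix.of_apply, hvcast, hvlast2]
    split_ifs <;> first | rfl | omega
  have hsub1 : (T z (n+2)).submatrix (Fin.last (n+1)).succAbove (Fin.last (n+1)).succAbove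
      = T z (n+1) := by
    rw [Fin.succAbove_last]
    exact T_submatrix z (n+1)
  rw [hTll, hTlc, hsub1] at hdet
  rw [show ((T z (n+2)).submatrix (Fin.last (n+1)).succAbove ((Fin.last n).castSucc).succAbove).det
      = M1.det from rfl, hM1] at hdet
  rw [hvlast2, hvcast] at hdet
  have ho : (-1:ℝ[X])^(n+1+n) = -1 := Odd.neg_one_pow ⟨n, by ring⟩
  have he2 : (-1:ℝ[X])^(n+1+(n+1)) = 1 := Even.neg_one_pow ⟨n+1, by ring⟩
  rw [ho, he2] at hdet
  show (T z (n+2)).det = _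
  rw [hdet, g, g, e, _root_.map_mul]
  ring

lemma G_entries (z : ℕ → ℝ) (n : ℕ) :
    G z (n+1) 0 1 = g z (n+2) - C (z (n+1)) * X * g z (n+1) ∧
    G z (n+1) 1 1 = C (z (n+1)) * g z (n+1) := by
  induction n with
  | zero =>
      rw [G_succ, G_zero, mul_one]
      constructor
      · rw [g_rec, g_zero, g_one, show e z 0 = 1 - z 1 by simp [e]]
        simp only [Nm, Matrix.cons_val', Matrix.cons_val_zero, Matrix.cons_val_one,
          Matrix.head_cons, Matrix.head_fin_const, Matrix.empty_val', Matrix.cons_val_fin_one,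
          Matrix.of_apply, map_sub, Polynomial.C_1]
        ring
      · rw [g_one]
        simp [Nm]
  | succ n ih =>
      obtain ⟨h1, h2⟩ := ih
      have hrec := g_rec z (n+1)
      have he : e z (n+1) = z (n+1) * (1 - z (n+2)) := by simp [e]
      constructor
      · rw [G_succ, Matrix.mul_apply, Fin.sum_univ_two, h1, h2, hrec, he]
        simp only [Nm, Matrix.cons_val', Matrix.cons_val_zero, Matrix.cons_val_one,
          Matrix.head_cons, Matrix.head_fin_const, Matrix.empty_val',
          Matrix.cons_val_fin_one, Matrix.of_apply, map_sub, Polynomial.C_1, _root_.map_mul]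
        ring
      · rw [G_succ, Matrix.mul_apply, Fin.sum_univ_two, h1, h2]
        simp only [Nm, Matrix.cons_val', Matrix.cons_val_zero, Matrix.cons_val_one,
          Matrix.head_cons, Matrix.head_fin_const, Matrix.empty_val',
          Matrix.cons_val_fin_one, Matrix.of_apply]
        ring

lemma G_sum (z : ℕ → ℝ) (n : ℕ) : G z n 0 1 + X * G z n 1 1 = g z (n+1) := by
  cases n with
  | zero =>
      rw [G_zero, g_one]
      simp [Matrix.one_apply]
  | succ n =>
      obtain ⟨h1, h2⟩ := G_entries z n
      rw [h1, h2]; ring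

end

end Stmt19Aux

open Stmt19Aux Polynomial

/-- The tridiagonal matrices `A` (parameters `x₁, …, x_{m-1}`) and `B` (the reversed
parameter sequence) have the same characteristic polynomial. (Rows indexed
`0, …, m-1`; 1-indexed row `k` corresponds to index `k - 1`.) -/
theorem stmt_19 (m : ℕ) (hm : 2 ≤ m) (x : ℕ → ℝ)
    (A B : Matrix (Fin m) (Fin m) ℝ)
    (hA : ∀ r l : Fin m, A r l =
      if r.val = 0 then (if l.val = 1 then 1 else 0)
      else if l.val + 1 = r.val then 1 - x r.val
      else if l.val = r.val + 1 then x r.val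
      else 0)
    (hB : ∀ r l : Fin m, B r l =
      if r.val = 0 then (if l.val = 1 then 1 else 0)
      else if l.val + 1 = r.val then 1 - x (m - r.val)
      else if l.val = r.val + 1 then x (m - r.val)
      else 0) :
    A.charpoly = B.charpoly := by
  set y : ℕ → ℝ := fun k => x (m - k) with hy
  have key : ∀ (M : Matrix (Fin m) (Fin m) ℝ) (z : ℕ → ℝ),
      (∀ r l : Fin m, M r l =
        if r.val = 0 then (if l.val = 1 then 1 else 0)
        else if l.val + 1 = r.val then 1 - z r.val
        else if l.val = r.val + 1 then z r.val
        else 0) → M.charpoly = g z m := by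
    intro M z hM
    have hTM : M.charmatrix = T z m := by
      ext i j
      by_cases hij : i = j
      · subst hij
        rw [Matrix.charmatrix_apply_eq, hM]
        have h0 : (if (i:ℕ) = 0 then (if (i:ℕ) = 1 then (1:ℝ) else 0)
            else if (i:ℕ) + 1 = (i:ℕ) then 1 - z i
            else if (i:ℕ) = (i:ℕ) + 1 then z i else 0) = 0 := by
          split_ifs <;> first | rfl | omega
        rw [h0]
        simp [T]
      · have hij' : (i:ℕ) ≠ (j:ℕ) := fun h => hij (Fin.ext h)
        rw [Matrix.charmatrix_apply_ne _ _ _ hij, hM]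
        simp only [T, Matrix.of_apply]
        split_ifs with h1 h2 h3 h4 h5 h6 h7 h8 h9 h10 h11 h12 <;>
          first | rfl | omega | simp_all | (exfalso; omega)
    rw [Matrix.charpoly, hTM, g]
  have hAc : A.charpoly = g x m := key A x hA
  have hBc : B.charpoly = g y m := key B y hB
  rw [hAc, hBc]
  have hm1 : m - 1 + 1 = m := by omega
  have hgx : g x m = G x (m-1) 0 1 + X * G x (m-1) 1 1 := by
    rw [G_sum, hm1]
  have hgy : g y m = G y (m-1) 0 1 + X * G y (m-1) 1 1 := by
    rw [G_sum, hm1]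
  have hdl : dl y (m-1) = (dl x (m-1)).reverse := by
    rw [dl, dl, ofFn_reverse]
    congr 1
    funext i
    have hi : (i : ℕ) < m - 1 := i.isLt
    simp only [hy, Fin.rev]
    congr 1
    omega
  have hrev : (G x (m-1))ᵀ * Qm = Qm * G y (m-1) := by
    rw [G, G, hdl]
    exact Pl_reverse (dl x (m-1))
  have h11' : ((G x (m-1))ᵀ * Qm) 1 1 = (Qm * G y (m-1)) 1 1 := by rw [hrev]
  rw [Matrix.mul_apply, Matrix.mul_apply] at h11'
  simp only [Fin.sum_univ_two, Matrix.transpose_apply, Qm, Matrix.cons_val', Matrix.cons_val_zero,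
    Matrix.cons_val_one, Matrix.head_cons, Matrix.head_fin_const, Matrix.empty_val',
    Matrix.cons_val_fin_one, Matrix.of_apply] at h11'
  have hX : (X^2 - 1 : ℝ[X]) ≠ 0 := by
    intro h
    have := congrArg (Polynomial.eval 0) h
    simp at this
  apply mul_left_cancel₀ hX
  rw [hgx, hgy]
  linear_combination h11'
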